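/- Let p, q be polynomials over ℂ, let β ∈ ℂ and l ≥ 1, and suppose q(X) = (X − β)^l · v(X) for a polynomial v with v(β) ≠ 0, and p(β) ≠ 0. Define N(z) = z − (p(z)·q(z))/(p'(z)·q(z) − p(z)·q'(z)). Then (N(z) − β)/(z − β) tends to (l+1)/l as z tends to β through values z ≠ β. -/

import Mathlib

open Polynomial Filter Topology

/-- A pole `β` of multiplicity `l` of the rational function `p/q` is a fixed point of the
Newton map `N(z) = z - (p q)/(p' q - p q')` with multiplier `(l+1)/l`:
`(N z - β)/(z - β) → (l+1)/l` as `z → β`, `z ≠ β`. -/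
theorem newton_pole_multiplier
    (p q v : ℂ[X]) (β : ℂ) (l : ℕ) (hl : 1 ≤ l)
    (hq : q = (X - C β) ^ l * v) (hv : v.eval β ≠ 0) (hp : p.eval β ≠ 0)
    (N : ℂ → ℂ)
    (hN : ∀ z, N z = z - (p.eval z * q.eval z) /
      (p.derivative.eval z * q.eval z - p.eval z * q.derivative.eval z)) :
    Tendsto (fun z => (N z - β) / (z - β)) (𝓝[≠] β) (𝓝 (((l : ℂ) + 1) / (l : ℂ))) := by
  obtain ⟨m, rfl⟩ : ∃ m, l = m + 1 := ⟨l - 1, by omega⟩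
  set L : ℕ := m + 1 with hL
  have hl0 : (L : ℂ) ≠ 0 := Nat.cast_ne_zero.mpr (by omega)
  set E : ℂ → ℂ := fun z => (z - β) * p.derivative.eval z * v.eval z
      - (L : ℂ) * (p.eval z * v.eval z) - (z - β) * (p.eval z * v.derivative.eval z)
    with hE
  have hEβ : E β = -((L : ℂ) * (p.eval β * v.eval β)) := by simp [hE]
  have hEβ0 : E β ≠ 0 := by
    rw [hEβ]
    exact neg_ne_zero.mpr (mul_ne_zero hl0 (mul_ne_zero hp hv))
  have key : ∀ z, z ≠ β →
      (N z - β) / (z - β) = 1 - (p.eval z * v.eval z) / E z := by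
    intro z hz
    have hw : z - β ≠ 0 := sub_ne_zero.mpr hz
    have hqz : q.eval z = (z - β) ^ L * v.eval z := by simp [hq]
    have hq'z : q.derivative.eval z
        = (L : ℂ) * (z - β) ^ m * v.eval z + (z - β) ^ L * v.derivative.eval z := by
      rw [hq, derivative_mul, derivative_pow]
      simp [mul_comm, mul_assoc, mul_left_comm]
      left; rw [hL, Nat.add_sub_cancel]
    have hD : p.derivative.eval z * q.eval z - p.eval z * q.derivative.eval z
        = (z - β) ^ m * E z := by
      rw [hqz, hq'z, hE, hL]
      ring
    have hnum : p.eval z * q.eval z = (z - β) ^ m * ((z - β) * (p.eval z * v.eval z)) := by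
      rw [hqz, hL]; ring
    have hwm : (z - β) ^ m ≠ 0 := pow_ne_zero _ hw
    rw [hN z, hD, hnum, mul_div_mul_left _ _ hwm, mul_div_assoc]
    rw [show z - (z - β) * (p.eval z * v.eval z / E z) - β
        = (z - β) * (1 - p.eval z * v.eval z / E z) by ring]
    rw [mul_comm, mul_div_assoc, div_self hw, mul_one]
  have hcont : Tendsto (fun z => 1 - (p.eval z * v.eval z) / E z) (𝓝 β)
      (𝓝 (1 - (p.eval β * v.eval β) / E β)) := by
    apply Tendsto.sub tendsto_const_nhds
    apply Tendsto.div
    · exact ((p.continuous_aeval.tendsto β).mul (v.continuous_aeval.tendsto β))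
    · have : Continuous E := by
        simp only [hE]; continuity
      exact this.tendsto β
    · exact hEβ0
  have hval : 1 - (p.eval β * v.eval β) / E β = ((L : ℂ) + 1) / (L : ℂ) := by
    rw [hEβ]
    field_simp
    ring
  rw [hval] at hcont
  refine (hcont.mono_left nhdsWithin_le_nhds).congr' ?_
  filter_upwards [self_mem_nhdsWithin] with z hz
  exact (key z hz).symm
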